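/- Fix an integer w ≥ 2. Let (I_l)_{l ≥ 1}, (n_d)_{d ≥ 1}, (N_l)_{l ≥ 1}, (m_d)_{d ≥ 1} be sequences of rational numbers satisfying: (i) I_l = Σ_{k | l} (1/k³) · n_{l/k} for all l ≥ 1; (ii) N_l = Σ_{k | l} (1/k²) · binom(k((l/k)w−1)−1, k−1) · m_{l/k} for all l ≥ 1; and (iii) N_l = (-1)^{lw+1} · lw · I_l for all l ≥ 1. Then for every positive integer s, Σ_{t | s} C_{st} · m_t = (-1)^{sw+1} · sw · n_s. -/

import Mathlib

open Finset

/-- Number of distinct prime factors of `n`. -/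
def omegaN (n : ℕ) : ℕ := n.primeFactors.card

/-- `I(n)`: divisors `k` of `n` such that `n/k` is squarefree. -/
def Iset (n : ℕ) : Finset ℕ := n.divisors.filter (fun k => Squarefree (n / k))

/-- The matrix entry `C_{st}` (depending on `w`). -/
noncomputable def Cmat (w s t : ℕ) : ℚ :=
  if t ∣ s then
    ((-1 : ℚ) ^ (s * w) / ((s / t : ℕ) : ℚ) ^ 2) *
      ∑ k ∈ Iset (s / t),
        (-1 : ℚ) ^ (omegaN (s / (k * t))) * (-1 : ℚ) ^ (k * t * w) *
          (Nat.choose (k * (t * w - 1) - 1) (k - 1) : ℚ)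
  else 0

namespace BPSAux

open ArithmeticFunction
open scoped ArithmeticFunction.Moebius ArithmeticFunction.zeta ArithmeticFunction.omega

lemma omegaN_eq (n : ℕ) : omegaN n = ω n := by
  rw [cardDistinctFactors_apply, omegaN, Nat.primeFactors, List.card_toFinset]

lemma sum_Iset (u : ℕ) (f : ℕ → ℚ) :
    ∑ k ∈ Iset u, (-1 : ℚ) ^ (omegaN (u / k)) * f k
      = ∑ k ∈ u.divisors, ((μ (u / k) : ℤ) : ℚ) * f k := by
  rw [Iset, Finset.sum_filter]
  refine Finset.sum_congr rfl fun k hk => ?_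
  by_cases hsf : Squarefree (u / k)
  · rw [if_pos hsf, moebius_apply_of_squarefree hsf,
      ← (cardDistinctFactors_eq_cardFactors_iff_squarefree hsf.ne_zero).mpr hsf,
      ← omegaN_eq]
    push_cast
    ring
  · rw [if_neg hsf, moebius_eq_zero_of_not_squarefree hsf]
    simp

lemma moebius_delta (u : ℕ) :
    ∑ q ∈ u.divisorsAntidiagonal, ((μ q.2 : ℤ) : ℚ) = if u = 1 then 1 else 0 := by
  have h1 : ∑ q ∈ u.divisorsAntidiagonal, (μ q.2 : ℤ) = ∑ i ∈ u.divisors, μ i := by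
    rw [Nat.sum_divisorsAntidiagonal (fun _ d => (μ d : ℤ)), Nat.sum_div_divisors]
  have h2 : ∑ i ∈ u.divisors, μ i = if u = 1 then 1 else 0 := by
    have h : (μ * ζ : ArithmeticFunction ℤ) u = (1 : ArithmeticFunction ℤ) u := by
      rw [moebius_mul_coe_zeta]
    rwa [coe_mul_zeta_apply, one_apply] at h
  rw [← Int.cast_sum, h1, h2]
  split <;> simp

lemma neg_pow_two_mul_add (a b : ℕ) : (-1 : ℚ) ^ (2 * a + b) = (-1) ^ b := by
  rw [pow_add, pow_mul, neg_one_sq, one_pow, one_mul]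

lemma triple_swap (s : ℕ) (F : ℕ → ℕ → ℕ → ℚ) :
    ∑ p ∈ s.divisorsAntidiagonal, ∑ q ∈ p.2.divisorsAntidiagonal, F q.2 q.1 p.1
      = ∑ p ∈ s.divisorsAntidiagonal, ∑ q ∈ p.2.divisorsAntidiagonal, F p.1 q.1 q.2 := by
  rw [Finset.sum_sigma', Finset.sum_sigma']
  refine Finset.sum_nbij'
    (fun x => ⟨(x.2.2, x.2.1 * x.1.1), (x.2.1, x.1.1)⟩)
    (fun x => ⟨(x.2.2, x.2.1 * x.1.1), (x.2.1, x.1.1)⟩)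
    ?_ ?_ ?_ ?_ (fun x hx => rfl)
  · intro x hx
    simp only [Finset.mem_sigma, Nat.mem_divisorsAntidiagonal] at hx ⊢
    obtain ⟨⟨h1, hs0⟩, h2, hu0⟩ := hx
    have hk : x.2.1 ≠ 0 := fun h => hu0 (by rw [← h2, h, zero_mul])
    have ht : x.1.1 ≠ 0 := fun h => hs0 (by rw [← h1, h, zero_mul])
    refine ⟨⟨?_, hs0⟩, trivial, mul_ne_zero hk ht⟩
    rw [← h1, ← h2]; ring
  · intro x hx
    simp only [Finset.mem_sigma, Nat.mem_divisorsAntidiagonal] at hx ⊢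
    obtain ⟨⟨h1, hs0⟩, h2, hu0⟩ := hx
    have hk : x.2.1 ≠ 0 := fun h => hu0 (by rw [← h2, h, zero_mul])
    have ht : x.1.1 ≠ 0 := fun h => hs0 (by rw [← h1, h, zero_mul])
    refine ⟨⟨?_, hs0⟩, trivial, mul_ne_zero hk ht⟩
    rw [← h1, ← h2]; ring
  · intro x hx
    simp only [Finset.mem_sigma, Nat.mem_divisorsAntidiagonal] at hx
    obtain ⟨⟨h1, hs0⟩, h2, hu0⟩ := hx
    simp [h2]
  · intro x hx
    simp only [Finset.mem_sigma, Nat.mem_divisorsAntidiagonal] at hx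
    obtain ⟨⟨h1, hs0⟩, h2, hu0⟩ := hx
    simp [h2]

end BPSAux

open BPSAux ArithmeticFunction ArithmeticFunction.Moebius in
theorem local_relative_bps_correspondence (w : ℕ) (hw : 2 ≤ w)
    (I n N m : ℕ → ℚ)
    (h1 : ∀ l : ℕ, 0 < l → I l = ∑ k ∈ l.divisors, (1 / (k : ℚ) ^ 3) * n (l / k))
    (h2 : ∀ l : ℕ, 0 < l →
      N l = ∑ k ∈ l.divisors,
        (1 / (k : ℚ) ^ 2) * (Nat.choose (k * ((l / k) * w - 1) - 1) (k - 1) : ℚ) *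
          m (l / k))
    (h3 : ∀ l : ℕ, 0 < l → N l = (-1 : ℚ) ^ (l * w + 1) * ((l * w : ℕ) : ℚ) * I l) :
    ∀ s : ℕ, 0 < s →
      ∑ t ∈ s.divisors, Cmat w s t * m t =
        (-1 : ℚ) ^ (s * w + 1) * ((s * w : ℕ) : ℚ) * n s := by
  intro s hs
  have hs0 : s ≠ 0 := hs.ne'
  -- Möbius inversion of h1
  have hinv : n s = ∑ p ∈ s.divisorsAntidiagonal, (μ p.1 : ℚ) / (p.1 : ℚ) ^ 3 * I p.2 := by
    have step1 : ∑ p ∈ s.divisorsAntidiagonal, (μ p.1 : ℚ) / (p.1 : ℚ) ^ 3 * I p.2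
        = ∑ p ∈ s.divisorsAntidiagonal, ∑ q ∈ p.2.divisorsAntidiagonal,
            (μ p.1 : ℚ) / (p.1 : ℚ) ^ 3 * (1 / (q.1 : ℚ) ^ 3 * n q.2) := by
      refine Finset.sum_congr rfl fun p hp => ?_
      obtain ⟨hp1, hsne⟩ := Nat.mem_divisorsAntidiagonal.mp hp
      have hu : 0 < p.2 := Nat.pos_of_ne_zero fun h => hsne (by rw [← hp1, h, mul_zero])
      rw [h1 p.2 hu, Finset.mul_sum,
        ← Nat.sum_divisorsAntidiagonal
          (fun k t => (μ p.1 : ℚ) / (p.1 : ℚ) ^ 3 * (1 / (k : ℚ) ^ 3 * n t))]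
    have step2 : ∑ p ∈ s.divisorsAntidiagonal, ∑ q ∈ p.2.divisorsAntidiagonal,
            (μ p.1 : ℚ) / (p.1 : ℚ) ^ 3 * (1 / (q.1 : ℚ) ^ 3 * n q.2)
        = ∑ p ∈ s.divisorsAntidiagonal, ∑ q ∈ p.2.divisorsAntidiagonal,
            (μ q.2 : ℚ) / (q.2 : ℚ) ^ 3 * (1 / (q.1 : ℚ) ^ 3 * n p.1) :=
      (triple_swap s (fun d k t => (μ d : ℚ) / (d : ℚ) ^ 3 * (1 / (k : ℚ) ^ 3 * n t))).symm
    have step3 : ∑ p ∈ s.divisorsAntidiagonal, ∑ q ∈ p.2.divisorsAntidiagonal,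
            (μ q.2 : ℚ) / (q.2 : ℚ) ^ 3 * (1 / (q.1 : ℚ) ^ 3 * n p.1)
        = ∑ p ∈ s.divisorsAntidiagonal, (if p.2 = 1 then n p.1 else 0) := by
      refine Finset.sum_congr rfl fun p hp => ?_
      obtain ⟨hp1, hsne⟩ := Nat.mem_divisorsAntidiagonal.mp hp
      have huq : ∀ q ∈ p.2.divisorsAntidiagonal,
          (μ q.2 : ℚ) / (q.2 : ℚ) ^ 3 * (1 / (q.1 : ℚ) ^ 3 * n p.1)
            = n p.1 / (p.2 : ℚ) ^ 3 * (μ q.2 : ℚ) := by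
        intro q hq
        obtain ⟨hq1, hune⟩ := Nat.mem_divisorsAntidiagonal.mp hq
        have hk0 : (q.1 : ℚ) ≠ 0 := Nat.cast_ne_zero.mpr
          (fun h => hune (by rw [← hq1, h, zero_mul]))
        have hd0 : (q.2 : ℚ) ≠ 0 := Nat.cast_ne_zero.mpr
          (fun h => hune (by rw [← hq1, h, mul_zero]))
        have hcast : (p.2 : ℚ) = (q.1 : ℚ) * (q.2 : ℚ) := by rw [← hq1]; push_cast; ring
        rw [hcast]
        field_simp
      rw [Finset.sum_congr rfl huq, ← Finset.mul_sum, moebius_delta]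
      by_cases h : p.2 = 1
      · rw [if_pos h, if_pos h, h]
        norm_num
      · rw [if_neg h, if_neg h, mul_zero]
    rw [step1, step2, step3]
    rw [Finset.sum_eq_single_of_mem (s, 1) (Nat.mem_divisorsAntidiagonal.mpr (by simp [hs0]))]
    · simp
    · intro q hq hne
      obtain ⟨hq1, _⟩ := Nat.mem_divisorsAntidiagonal.mp hq
      have : q.2 ≠ 1 := by
        intro h
        apply hne
        have h' : q.1 = s := by rw [← hq1, h, mul_one]
        rw [Prod.ext_iff]
        exact ⟨h', h⟩
      rw [if_neg this]
  -- Step R1: express RHS via N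
  have stepR1 : (-1 : ℚ) ^ (s * w + 1) * ((s * w : ℕ) : ℚ) * n s
      = ∑ p ∈ s.divisorsAntidiagonal,
          (μ p.1 : ℚ) / (p.1 : ℚ) ^ 2 * (-1 : ℚ) ^ (s * w + p.2 * w) * N p.2 := by
    rw [hinv, Finset.mul_sum]
    refine Finset.sum_congr rfl fun p hp => ?_
    obtain ⟨hp1, hsne⟩ := Nat.mem_divisorsAntidiagonal.mp hp
    have hu : 0 < p.2 := Nat.pos_of_ne_zero fun h => hsne (by rw [← hp1, h, mul_zero])
    have hd0 : (p.1 : ℚ) ≠ 0 := Nat.cast_ne_zero.mpr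
      (fun h => hsne (by rw [← hp1, h, zero_mul]))
    rw [h3 p.2 hu]
    have hsign : (-1 : ℚ) ^ (s * w + p.2 * w) * (-1 : ℚ) ^ (p.2 * w + 1)
        = (-1 : ℚ) ^ (s * w + 1) := by
      rw [← pow_add, show s * w + p.2 * w + (p.2 * w + 1) = 2 * (p.2 * w) + (s * w + 1) by ring,
        neg_pow_two_mul_add]
    have hcast : ((s * w : ℕ) : ℚ) = (p.1 : ℚ) * ((p.2 * w : ℕ) : ℚ) := by
      rw [← hp1]; push_cast; ring
    rw [show (μ p.1 : ℚ) / (p.1 : ℚ) ^ 2 * (-1 : ℚ) ^ (s * w + p.2 * w) *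
          ((-1 : ℚ) ^ (p.2 * w + 1) * ((p.2 * w : ℕ) : ℚ) * I p.2)
        = (μ p.1 : ℚ) / (p.1 : ℚ) ^ 2 *
            ((-1 : ℚ) ^ (s * w + p.2 * w) * (-1 : ℚ) ^ (p.2 * w + 1)) *
            (((p.2 * w : ℕ) : ℚ) * I p.2) from by ring, hsign, hcast]
    field_simp
  -- Step R2: expand N by h2
  have stepR2 : ∑ p ∈ s.divisorsAntidiagonal,
          (μ p.1 : ℚ) / (p.1 : ℚ) ^ 2 * (-1 : ℚ) ^ (s * w + p.2 * w) * N p.2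
      = ∑ p ∈ s.divisorsAntidiagonal, ∑ q ∈ p.2.divisorsAntidiagonal,
          (μ p.1 : ℚ) / (p.1 : ℚ) ^ 2 *
            ((-1 : ℚ) ^ (s * w + q.1 * q.2 * w) / (q.1 : ℚ) ^ 2) *
            (Nat.choose (q.1 * (q.2 * w - 1) - 1) (q.1 - 1) : ℚ) * m q.2 := by
    refine Finset.sum_congr rfl fun p hp => ?_
    obtain ⟨hp1, hsne⟩ := Nat.mem_divisorsAntidiagonal.mp hp
    have hu : 0 < p.2 := Nat.pos_of_ne_zero fun h => hsne (by rw [← hp1, h, mul_zero])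
    rw [h2 p.2 hu,
      ← Nat.sum_divisorsAntidiagonal
        (fun k t => (1 / (k : ℚ) ^ 2) * (Nat.choose (k * (t * w - 1) - 1) (k - 1) : ℚ) * m t),
      Finset.mul_sum]
    refine Finset.sum_congr rfl fun q hq => ?_
    obtain ⟨hq1, hune⟩ := Nat.mem_divisorsAntidiagonal.mp hq
    rw [show s * w + q.1 * q.2 * w = s * w + p.2 * w by rw [hq1]]
    ring
  -- Step L: expand Cmat
  have stepL : ∑ t ∈ s.divisors, Cmat w s t * m t
      = ∑ p ∈ s.divisorsAntidiagonal, ∑ q ∈ p.2.divisorsAntidiagonal,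
          (μ q.2 : ℚ) / (q.2 : ℚ) ^ 2 *
            ((-1 : ℚ) ^ (s * w + q.1 * p.1 * w) / (q.1 : ℚ) ^ 2) *
            (Nat.choose (q.1 * (p.1 * w - 1) - 1) (q.1 - 1) : ℚ) * m p.1 := by
    rw [← Nat.sum_divisorsAntidiagonal (fun t _ => Cmat w s t * m t)]
    refine Finset.sum_congr rfl fun p hp => ?_
    obtain ⟨hp1, hsne⟩ := Nat.mem_divisorsAntidiagonal.mp hp
    have ht0 : p.1 ≠ 0 := fun h => hsne (by rw [← hp1, h, zero_mul])
    have hdvd : p.1 ∣ s := ⟨p.2, hp1.symm⟩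
    have hdiv : s / p.1 = p.2 := by
      rw [← hp1]; exact Nat.mul_div_cancel_left _ (Nat.pos_of_ne_zero ht0)
    have hre : ∀ k : ℕ, s / (k * p.1) = p.2 / k := fun k => by
      rw [mul_comm, ← Nat.div_div_eq_div_mul, hdiv]
    have hIs : ∑ k ∈ Iset p.2,
        (-1 : ℚ) ^ (omegaN (p.2 / k)) * (-1 : ℚ) ^ (k * p.1 * w) *
          (Nat.choose (k * (p.1 * w - 1) - 1) (k - 1) : ℚ)
        = ∑ q ∈ p.2.divisorsAntidiagonal, ((μ q.2 : ℤ) : ℚ) *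
            ((-1 : ℚ) ^ (q.1 * p.1 * w) *
              (Nat.choose (q.1 * (p.1 * w - 1) - 1) (q.1 - 1) : ℚ)) := by
      rw [Finset.sum_congr rfl (fun k _ => mul_assoc
          ((-1 : ℚ) ^ (omegaN (p.2 / k))) ((-1 : ℚ) ^ (k * p.1 * w))
          ((Nat.choose (k * (p.1 * w - 1) - 1) (k - 1) : ℚ))),
        sum_Iset p.2 (fun k => (-1 : ℚ) ^ (k * p.1 * w) *
          (Nat.choose (k * (p.1 * w - 1) - 1) (k - 1) : ℚ)),
        ← Nat.sum_divisorsAntidiagonal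
          (fun k d => ((μ d : ℤ) : ℚ) * ((-1 : ℚ) ^ (k * p.1 * w) *
            (Nat.choose (k * (p.1 * w - 1) - 1) (k - 1) : ℚ)))]
    rw [Cmat, if_pos hdvd, hdiv]
    simp only [hre]
    rw [hIs, Finset.mul_sum, Finset.sum_mul]
    refine Finset.sum_congr rfl fun q hq => ?_
    obtain ⟨hq1, hune⟩ := Nat.mem_divisorsAntidiagonal.mp hq
    have hk0 : (q.1 : ℚ) ≠ 0 := Nat.cast_ne_zero.mpr
      (fun h => hune (by rw [← hq1, h, zero_mul]))
    have hd0 : (q.2 : ℚ) ≠ 0 := Nat.cast_ne_zero.mpr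
      (fun h => hune (by rw [← hq1, h, mul_zero]))
    have hcast : (p.2 : ℚ) = (q.1 : ℚ) * (q.2 : ℚ) := by rw [← hq1]; push_cast; ring
    rw [hcast, pow_add]
    field_simp
  rw [stepL,
    triple_swap s (fun d k t => (μ d : ℚ) / (d : ℚ) ^ 2 *
      ((-1 : ℚ) ^ (s * w + k * t * w) / (k : ℚ) ^ 2) *
      (Nat.choose (k * (t * w - 1) - 1) (k - 1) : ℚ) * m t),
    stepR1, stepR2]
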